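/- Let I' be the connected component of a set of variable vertices I in the graph G \ J (the factor graph with the vertices of J removed), and let K' = V \ (I' ∪ J). If every path from I to K passes through J, then no factor of the distribution depends simultaneously on a variable in I' and a variable in K'. -/

import Mathlib

open Finset Classical
noncomputable section

/-- The bipartite factor graph: variable vertices `Fin N`, factor vertices `A`,
with an edge between variable `i` and factor `a` iff `i` is in the scope `S a`
of the factor. -/
def factorGraph (N : ℕ) (A : Type*) (S : A → Finset (Fin N)) :
    SimpleGraph (Fin N ⊕ A) where
  Adj v w := (∃ i a, v = Sum.inl i ∧ w = Sum.inr a ∧ i ∈ S a) ∨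
             (∃ i a, v = Sum.inr a ∧ w = Sum.inl i ∧ i ∈ S a)
  symm := by refine ⟨?_⟩; rintro v w (⟨i, a, rfl, rfl, h⟩ | ⟨i, a, rfl, rfl, h⟩)
             · exact Or.inr ⟨i, a, rfl, rfl, h⟩
             · exact Or.inl ⟨i, a, rfl, rfl, h⟩
  loopless := ⟨by rintro v (⟨i, a, rfl, h, _⟩ | ⟨i, a, rfl, h, _⟩) <;> simp at h⟩

/-- Let `I'` be the connected component of `I` in the factor graph with the
vertices of `J` removed (the variable vertices reachable from `I` by walks
avoiding `J`), and let `K' = V \ (I' ∪ J)`.  If every path from `I` to `K`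
passes through `J`, then no factor's scope meets both `I'` and `K'`. -/
theorem separated_component_no_common_factor
    (N : ℕ) (A : Type*) (S : A → Finset (Fin N))
    (I J K : Finset (Fin N))
    (hIJ : Disjoint I J) (hIK : Disjoint I K) (hJK : Disjoint J K)
    (hsep : ∀ i ∈ I, ∀ k ∈ K,
      ∀ w : (factorGraph N A S).Walk (Sum.inl i) (Sum.inl k),
        ∃ j ∈ J, Sum.inl j ∈ w.support)
    (I' : Set (Fin N))
    (hI' : I' = {v | ∃ i ∈ I, ∃ w : (factorGraph N A S).Walk (Sum.inl i) (Sum.inl v),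
      ∀ j ∈ J, Sum.inl j ∉ w.support})
    (K' : Set (Fin N)) (hK' : K' = {v | v ∉ I' ∧ v ∉ J}) :
    ∀ a : A, ¬ ((∃ i ∈ I', i ∈ S a) ∧ (∃ k ∈ K', k ∈ S a)) := by
  rintro a ⟨⟨i, hiI', hiS⟩, ⟨k, hkK', hkS⟩⟩
  rw [hK'] at hkK'
  obtain ⟨hkI', hkJ⟩ := hkK'
  rw [hI'] at hiI'
  obtain ⟨i₀, hi₀, w, hw⟩ := hiI'
  apply hkI'
  rw [hI']
  have e1 : (factorGraph N A S).Adj (Sum.inl i) (Sum.inr a) := Or.inl ⟨i, a, rfl, rfl, hiS⟩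
  have e2 : (factorGraph N A S).Adj (Sum.inr a) (Sum.inl k) := Or.inr ⟨k, a, rfl, rfl, hkS⟩
  refine ⟨i₀, hi₀, (w.concat e1).concat
    e2, ?_⟩
  intro j hj
  simp only [SimpleGraph.Walk.support_concat, List.concat_eq_append, List.mem_append,
    List.mem_singleton]
  rintro ((h | h) | h)
  · exact hw j hj h
  · simp at h
  · simp only [Sum.inl.injEq] at h
    exact hkJ (h ▸ hj)
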